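/- Let λ be a partition of n, 0 ≤ i ≤ n−1, and t, t' standard λ-tableaux with equal restrictions to entries > i. Let j be a strong descent of t with i < j and i an ascent of t, and set v = s_j t. Then v <_lex t'. Moreover, if i is a strong ascent of v, then s_i v is standard and s_i v <_lex t'; and if y is any standard λ-tableau with y < v in the Bruhat order, then y <_lex t'. -/

import Mathlib

/-- Partial sum `λ₁ + ⋯ + λ_k` of a 1-indexed sequence of parts. -/
def psum (lam : ℕ → ℕ) (k : ℕ) : ℕ := ∑ i ∈ Finset.Icc 1 k, lam i

/-- `lam` is a composition of `n` (1-indexed parts, extended by zeros). -/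
def IsComp (n : ℕ) (lam : ℕ → ℕ) : Prop :=
  lam 0 = 0 ∧ ∃ N, (∀ i, N < i → lam i = 0) ∧ psum lam N = n

/-- `lam` is a partition of `n` (weakly decreasing parts). -/
def IsPartition (n : ℕ) (lam : ℕ → ℕ) : Prop :=
  IsComp n lam ∧ ∀ i j, 1 ≤ i → i ≤ j → lam j ≤ lam i

/-- Dominance order in the paper's (column) convention: `lam` dominates `mu`
(written `mu ≤ lam`) iff every partial sum of `lam` is at most the
corresponding partial sum of `mu`. -/
def Dominates (lam mu : ℕ → ℕ) : Prop := ∀ k, psum lam k ≤ psum mu k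

/-- Row index of the box containing the entry `k`. -/
def rowT (p : ℕ → ℕ × ℕ) (k : ℕ) : ℕ := (p k).1
/-- Column index of the box containing the entry `k`. -/
def colT (p : ℕ → ℕ × ℕ) (k : ℕ) : ℕ := (p k).2

/-- `p` is the position function of a bijective filling of the skew diagram
`[lam] ∖ [mu]` (1-indexed rows and columns, `lam j` boxes in column `j`)
by the entries `a+1, …, a+n`. -/
def IsSkewTab (lam mu : ℕ → ℕ) (a n : ℕ) (p : ℕ → ℕ × ℕ) : Prop :=
  (∀ k ∈ Finset.Icc (a+1) (a+n),
      1 ≤ (p k).2 ∧ mu (p k).2 < (p k).1 ∧ (p k).1 ≤ lam (p k).2) ∧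
  (∀ k ∈ Finset.Icc (a+1) (a+n), ∀ l ∈ Finset.Icc (a+1) (a+n), p k = p l → k = l) ∧
  (∀ c : ℕ × ℕ, 1 ≤ c.2 → mu c.2 < c.1 → c.1 ≤ lam c.2 →
      ∃ k ∈ Finset.Icc (a+1) (a+n), p k = c)

/-- A straight-shape `lam`-tableau with entries `1, …, n`. -/
def IsTab (lam : ℕ → ℕ) (n : ℕ) (p : ℕ → ℕ × ℕ) : Prop :=
  IsSkewTab lam (fun _ => 0) 0 n p

/-- Entries increase down each column. -/
def ColStd (a n : ℕ) (p : ℕ → ℕ × ℕ) : Prop :=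
  ∀ k ∈ Finset.Icc (a+1) (a+n), ∀ l ∈ Finset.Icc (a+1) (a+n),
    colT p k = colT p l → rowT p k < rowT p l → k < l

/-- Entries increase along each row. -/
def RowStd (a n : ℕ) (p : ℕ → ℕ × ℕ) : Prop :=
  ∀ k ∈ Finset.Icc (a+1) (a+n), ∀ l ∈ Finset.Icc (a+1) (a+n),
    rowT p k = rowT p l → colT p k < colT p l → k < l

/-- Standard skew tableau of shape `lam/mu` with entries `a+1, …, a+n`. -/
def IsStdSkew (lam mu : ℕ → ℕ) (a n : ℕ) (p : ℕ → ℕ × ℕ) : Prop :=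
  IsSkewTab lam mu a n p ∧ ColStd a n p ∧ RowStd a n p

/-- Standard `lam`-tableau with entries `1, …, n`. -/
def IsStd (lam : ℕ → ℕ) (n : ℕ) (p : ℕ → ℕ × ℕ) : Prop :=
  IsStdSkew lam (fun _ => 0) 0 n p

/-- Column standard straight-shape `lam`-tableau. -/
def IsColStdTab (lam : ℕ → ℕ) (n : ℕ) (p : ℕ → ℕ × ℕ) : Prop :=
  IsTab lam n p ∧ ColStd 0 n p

/-- `i ∈ D(p)`: a descent, `col(i) ≥ col(i+1)`. -/
def inD (a n : ℕ) (p : ℕ → ℕ × ℕ) (i : ℕ) : Prop :=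
  a + 1 ≤ i ∧ i + 1 ≤ a + n ∧ colT p (i+1) ≤ colT p i
/-- `i ∈ SD(p)`: a strong descent, `col(i) > col(i+1)`. -/
def inSD (a n : ℕ) (p : ℕ → ℕ × ℕ) (i : ℕ) : Prop :=
  a + 1 ≤ i ∧ i + 1 ≤ a + n ∧ colT p (i+1) < colT p i
/-- `i ∈ WD(p)`: a weak descent, `col(i) = col(i+1)`. -/
def inWD (a n : ℕ) (p : ℕ → ℕ × ℕ) (i : ℕ) : Prop :=
  a + 1 ≤ i ∧ i + 1 ≤ a + n ∧ colT p (i+1) = colT p i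
/-- `i ∈ A(p)`: an ascent, `col(i) < col(i+1)`. -/
def inA (a n : ℕ) (p : ℕ → ℕ × ℕ) (i : ℕ) : Prop :=
  a + 1 ≤ i ∧ i + 1 ≤ a + n ∧ colT p i < colT p (i+1)
/-- `i ∈ SA(p)`: a strong ascent, `row(i) > row(i+1)`. -/
def inSA (a n : ℕ) (p : ℕ → ℕ × ℕ) (i : ℕ) : Prop :=
  a + 1 ≤ i ∧ i + 1 ≤ a + n ∧ rowT p (i+1) < rowT p i

/-- Descent set of a tableau with entries `1, …, n`. -/
def Dset (n : ℕ) (p : ℕ → ℕ × ℕ) : Set ℕ := {i | inD 0 n p i}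

/-- Shape of the restriction of `p` to entries `≤ m`: the number of boxes
of column `j` occupied by entries `≤ m`. -/
def resShape (p : ℕ → ℕ × ℕ) (m j : ℕ) : ℕ :=
  ((Finset.Icc 1 m).filter (fun k => colT p k = j)).card

/-- Extended dominance order on standard tableaux with `n` boxes: `u ≤ t`. -/
def ExtDomLe (n : ℕ) (pu pt : ℕ → ℕ × ℕ) : Prop :=
  ∀ m ∈ Finset.Icc 1 n, Dominates (fun j => resShape pt m j) (fun j => resShape pu m j)

/-- `i` is the restriction number of `(u,t)`: the restrictions to entries `≤ i`
agree, and `i` is maximal with this property. -/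
def RestNum (n : ℕ) (pu pt : ℕ → ℕ × ℕ) (i : ℕ) : Prop :=
  i ≤ n ∧ (∀ k, 1 ≤ k → k ≤ i → pu k = pt k) ∧ (i = n ∨ pu (i+1) ≠ pt (i+1))

/-- `(u,t)` is favourable with restriction number `i`:
`i` lies in the symmetric difference `D(u) ⊕ D(t)`. -/
def Favourable (n : ℕ) (pu pt : ℕ → ℕ × ℕ) (i : ℕ) : Prop :=
  RestNum n pu pt i ∧
    ((inD 0 n pu i ∧ ¬ inD 0 n pt i) ∨ (inD 0 n pt i ∧ ¬ inD 0 n pu i))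

/-- Dual Knuth move of the first kind of index `k` from `u` to `t`,
on standard tableaux of shape `lam`:  `t = s_k u` with
`D(u) ∩ {k-1,k} = {k-1}` and `D(t) ∩ {k-1,k} = {k}`. -/
def DK1 (lam : ℕ → ℕ) (n : ℕ) (pu pt : ℕ → ℕ × ℕ) (k : ℕ) : Prop :=
  IsStd lam n pu ∧ IsStd lam n pt ∧ 2 ≤ k ∧
  (∀ m, pt m = pu (Equiv.swap k (k+1) m)) ∧
  inD 0 n pu (k-1) ∧ ¬ inD 0 n pu k ∧ inD 0 n pt k ∧ ¬ inD 0 n pt (k-1)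

/-- Dual Knuth move of the second kind of index `k` from `u` to `t`:
`t = s_k u` with `D(u) ∩ {k,k+1} = {k+1}` and `D(t) ∩ {k,k+1} = {k}`. -/
def DK2 (lam : ℕ → ℕ) (n : ℕ) (pu pt : ℕ → ℕ × ℕ) (k : ℕ) : Prop :=
  IsStd lam n pu ∧ IsStd lam n pt ∧ k + 2 ≤ n ∧
  (∀ m, pt m = pu (Equiv.swap k (k+1) m)) ∧
  inD 0 n pu (k+1) ∧ ¬ inD 0 n pu k ∧ inD 0 n pt k ∧ ¬ inD 0 n pt (k+1)

/-- A dual Knuth move (of either kind) of index `k` from `u` to `t`. -/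
def DKMove (lam : ℕ → ℕ) (n : ℕ) (pu pt : ℕ → ℕ × ℕ) (k : ℕ) : Prop :=
  DK1 lam n pu pt k ∨ DK2 lam n pu pt k

/-- A paired dual Knuth move: a dual Knuth move of the same kind and the same
index applied simultaneously to both components of a pair. -/
def PairedDKMove (mu lam : ℕ → ℕ) (n : ℕ)
    (a b : (ℕ → ℕ × ℕ) × (ℕ → ℕ × ℕ)) : Prop :=
  ∃ k, (DK1 mu n a.1 b.1 k ∧ DK1 lam n a.2 b.2 k) ∨
       (DK2 mu n a.1 b.1 k ∧ DK2 lam n a.2 b.2 k)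

/-- Paired dual Knuth equivalence: the equivalence relation generated by
paired dual Knuth moves. -/
def PairedDKEquiv (mu lam : ℕ → ℕ) (n : ℕ)
    (a b : (ℕ → ℕ × ℕ) × (ℕ → ℕ × ℕ)) : Prop :=
  Relation.ReflTransGen
    (fun x y => PairedDKMove mu lam n x y ∨ PairedDKMove mu lam n y x) a b

/-- Lexicographic order on same-shape column standard tableaux: `u <_lex t`. -/
def LexLT (n : ℕ) (pu pt : ℕ → ℕ × ℕ) : Prop :=
  ∃ l, 1 ≤ l ∧ l ≤ n ∧ colT pt l < colT pu l ∧
    ∀ m, l < m → m ≤ n → colT pt m = colT pu m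

/-- `w` is a permutation of `[1,n]`, fixing all other natural numbers. -/
def IsPermOf (n : ℕ) (w : ℕ → ℕ) : Prop :=
  (∀ k ∈ Finset.Icc 1 n, w k ∈ Finset.Icc 1 n) ∧
  (∀ k ∈ Finset.Icc 1 n, ∀ l ∈ Finset.Icc 1 n, w k = w l → k = l) ∧
  (∀ k, k ∉ Finset.Icc 1 n → w k = k)

/-- The Coxeter length of `w ∈ S_n`: the number of inversions. -/
def lenInv (n : ℕ) (w : ℕ → ℕ) : ℕ :=
  ((Finset.Icc 1 n ×ˢ Finset.Icc 1 n).filter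
    (fun q => q.1 < q.2 ∧ w q.2 < w q.1)).card

/-- One step of the Bruhat order on `S_n`: `y = (i j) ∘ x` (so `y x⁻¹` is a
reflection) with `l(x) < l(y)`. -/
def BruhatStep (n : ℕ) (x y : ℕ → ℕ) : Prop :=
  lenInv n x < lenInv n y ∧
  ∃ i j, 1 ≤ i ∧ i < j ∧ j ≤ n ∧ ∀ k, y k = Equiv.swap i j (x k)

/-- The Bruhat order on `S_n`. -/
def BruhatLe (n : ℕ) (x y : ℕ → ℕ) : Prop :=
  Relation.ReflTransGen (BruhatStep n) x y

/-- One step of the left weak order on `S_n`: `y = s_i ∘ x` with `l(x) < l(y)`. -/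
def WeakStep (n : ℕ) (x y : ℕ → ℕ) : Prop :=
  lenInv n x < lenInv n y ∧
  ∃ i, 1 ≤ i ∧ i + 1 ≤ n ∧ ∀ k, y k = Equiv.swap i (i+1) (x k)

/-- The left weak order on `S_n`. -/
def WeakLe (n : ℕ) (x y : ℕ → ℕ) : Prop :=
  Relation.ReflTransGen (WeakStep n) x y

/-- `ptau` is (the position function of) the column superstandard tableau
`τ_lam`: column standard, with the columns filled in order from left to right. -/
def IsSuperstandard (lam : ℕ → ℕ) (n : ℕ) (ptau : ℕ → ℕ × ℕ) : Prop :=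
  IsTab lam n ptau ∧ ColStd 0 n ptau ∧
  ∀ k, 1 ≤ k → k + 1 ≤ n → colT ptau k ≤ colT ptau (k+1)

/-- `w = perm(t)`, i.e. `w · τ_lam = t`: for each `k`, the box of `τ_lam`
containing `k` contains `w k` in `t`. -/
def IsPermTab (n : ℕ) (ptau pt : ℕ → ℕ × ℕ) (w : ℕ → ℕ) : Prop :=
  IsPermOf n w ∧ ∀ k ∈ Finset.Icc 1 n, pt (w k) = ptau k

/-- `p` (a standard skew tableau of shape `lam/mu` with entries `a+1, …, a+n`)
is the `(a+1)`-critical tableau: writing `m = a+1`, the entry `m` lies in the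
first nonempty column `i` of the skew diagram, `m+1` lies in column `i+1`,
and the restriction to entries `> m+1` is minimal (no strong descents). -/
def IsCritical (lam mu : ℕ → ℕ) (a n : ℕ) (p : ℕ → ℕ × ℕ) : Prop :=
  IsStdSkew lam mu a n p ∧
  (∀ j, 1 ≤ j → j < colT p (a+1) → lam j ≤ mu j) ∧
  mu (colT p (a+1)) < lam (colT p (a+1)) ∧
  colT p (a+2) = colT p (a+1) + 1 ∧
  ∀ i, a + 3 ≤ i → i + 1 ≤ a + n → colT p i ≤ colT p (i+1)

/-- The box `c` is removable from the diagram of `lam`. -/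
def Removable (lam : ℕ → ℕ) (c : ℕ × ℕ) : Prop :=
  1 ≤ c.2 ∧ c.1 = lam c.2 ∧ lam (c.2 + 1) < c.1

/-- One step of a jeu de taquin slide on a filling `p` with entries `1, …, n`:
the hole moves from `b` to `b'`, where `b'` is the box (below or to the right
of `b`) containing the smaller entry `x` among the occupied candidates, and the
filling is updated by moving `x` into `b`. -/
def SlideStep (n : ℕ) (p : ℕ → ℕ × ℕ) (b : ℕ × ℕ)
    (p' : ℕ → ℕ × ℕ) (b' : ℕ × ℕ) : Prop :=
  ∃ x, 1 ≤ x ∧ x ≤ n ∧ p x = b' ∧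
    (b' = (b.1 + 1, b.2) ∨ b' = (b.1, b.2 + 1)) ∧
    (∀ y, 1 ≤ y → y ≤ n → (p y = (b.1 + 1, b.2) ∨ p y = (b.1, b.2 + 1)) → x ≤ y) ∧
    (∀ y, p' y = if y = x then b else p y)

/-- `lam/mu` is a skew partition of `n`. -/
def IsSkewShape (n : ℕ) (lam mu : ℕ → ℕ) : Prop :=
  (∃ m, IsPartition (m + n) lam ∧ IsPartition m mu) ∧ ∀ j, mu j ≤ lam j

lemma swap_other {a b m : ℕ} (h1 : m ≠ a) (h2 : m ≠ b) : Equiv.swap a b m = m :=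
  Equiv.swap_apply_of_ne_of_ne h1 h2

lemma swap_eval (k m : ℕ) :
    Equiv.swap k (k+1) m = if m = k then k+1 else if m = k+1 then k else m := by
  split_ifs with h1 h2
  · subst h1; exact Equiv.swap_apply_left _ _
  · subst h2; exact Equiv.swap_apply_right _ _
  · exact swap_other h1 h2

/-- Swapping adjacent entries in different rows and columns preserves standardness. -/
lemma swap_std {lam : ℕ → ℕ} {n : ℕ} {p q : ℕ → ℕ × ℕ} {k : ℕ}
    (hp : IsStd lam n p) (hk1 : 1 ≤ k) (hk2 : k + 1 ≤ n)
    (hrow : rowT p k ≠ rowT p (k+1)) (hcol : colT p k ≠ colT p (k+1))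
    (hq : ∀ m, q m = p (Equiv.swap k (k+1) m)) : IsStd lam n q := by
  obtain ⟨⟨hbox, hinj, hsurj⟩, hcs, hrs⟩ := hp
  have hσmem : ∀ m ∈ Finset.Icc (0+1) (0+n), Equiv.swap k (k+1) m ∈ Finset.Icc (0+1) (0+n) := by
    intro m hm
    rw [Finset.mem_Icc] at hm ⊢
    rw [swap_eval]; split_ifs <;> omega
  have hσlt : ∀ l m : ℕ, ¬(l = k ∧ m = k+1) → ¬(l = k+1 ∧ m = k) →
      Equiv.swap k (k+1) l < Equiv.swap k (k+1) m → l < m := by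
    intro l m h1 h2 hlt
    rw [swap_eval, swap_eval] at hlt
    split_ifs at hlt <;> omega
  refine ⟨⟨?_, ?_, ?_⟩, ?_, ?_⟩
  · intro m hm; rw [hq]; exact hbox _ (hσmem m hm)
  · intro m hm l hl hml
    rw [hq, hq] at hml
    exact (Equiv.swap k (k+1)).injective (hinj _ (hσmem m hm) _ (hσmem l hl) hml)
  · intro c hc1 hc2 hc3
    obtain ⟨m, hm, hpm⟩ := hsurj c hc1 hc2 hc3
    refine ⟨Equiv.swap k (k+1) m, hσmem m hm, ?_⟩
    rw [hq, Equiv.swap_apply_self]; exact hpm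
  · -- ColStd
    intro l hl m hm hcoleq hrowlt
    simp only [colT, rowT, hq] at hcoleq hrowlt
    have hlt := hcs _ (hσmem l hl) _ (hσmem m hm) hcoleq hrowlt
    refine hσlt l m ?_ ?_ hlt
    · rintro ⟨rfl, rfl⟩
      rw [Equiv.swap_apply_left, Equiv.swap_apply_right] at hcoleq
      exact hcol hcoleq.symm
    · rintro ⟨rfl, rfl⟩
      rw [Equiv.swap_apply_left, Equiv.swap_apply_right] at hcoleq
      exact hcol hcoleq
  · -- RowStd
    intro l hl m hm hroweq hcollt
    simp only [colT, rowT, hq] at hroweq hcollt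
    have hlt := hrs _ (hσmem l hl) _ (hσmem m hm) hroweq hcollt
    refine hσlt l m ?_ ?_ hlt
    · rintro ⟨rfl, rfl⟩
      rw [Equiv.swap_apply_left, Equiv.swap_apply_right] at hroweq
      exact hrow hroweq.symm
    · rintro ⟨rfl, rfl⟩
      rw [Equiv.swap_apply_left, Equiv.swap_apply_right] at hroweq
      exact hrow hroweq

lemma lexLT_trans {n : ℕ} {p1 p2 p3 : ℕ → ℕ × ℕ}
    (h12 : LexLT n p1 p2) (h23 : LexLT n p2 p3) : LexLT n p1 p3 := by
  obtain ⟨l1, hl11, hl1n, hlt1, hag1⟩ := h12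
  obtain ⟨l2, hl21, hl2n, hlt2, hag2⟩ := h23
  rcases lt_trichotomy l1 l2 with h | rfl | h
  · exact ⟨l2, hl21, hl2n, (hag1 l2 h hl2n) ▸ hlt2,
      fun m hm1 hm2 => (hag2 m hm1 hm2).trans (hag1 m (by omega) hm2)⟩
  · exact ⟨l1, hl11, hl1n, hlt2.trans hlt1,
      fun m hm1 hm2 => (hag2 m hm1 hm2).trans (hag1 m hm1 hm2)⟩
  · exact ⟨l1, hl11, hl1n, (hag2 l1 h hl1n) ▸ hlt1,
      fun m hm1 hm2 => (hag2 m (by omega) hm2).trans (hag1 m hm1 hm2)⟩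
/-- Number of `k ≤ p` with `w k ≥ q`: the Bruhat "dot" statistic. -/
def dInv (w : ℕ → ℕ) (p q : ℕ) : ℕ := ((Finset.Icc 1 p).filter (fun k => q ≤ w k)).card

lemma lenInv_swap_lt {n : ℕ} {x y : ℕ → ℕ} {k0 k1 : ℕ}
    (hinj : ∀ k ∈ Finset.Icc 1 n, ∀ l ∈ Finset.Icc 1 n, x k = x l → k = l)
    (hk0 : 1 ≤ k0) (hkk : k0 < k1) (hk1 : k1 ≤ n)
    (hab : x k0 < x k1)
    (hy : ∀ m, y m = x (Equiv.swap k0 k1 m)) :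
    lenInv n x < lenInv n y := by
  classical
  set a := x k0 with ha
  set b := x k1 with hb
  have hyk0 : y k0 = b := by rw [hy, Equiv.swap_apply_left]
  have hyk1 : y k1 = a := by rw [hy, Equiv.swap_apply_right]
  have hyid : ∀ m, m ≠ k0 → m ≠ k1 → y m = x m := by
    intro m h1 h2; rw [hy, swap_other h1 h2]
  set A := ((Finset.Icc 1 n ×ˢ Finset.Icc 1 n).filter
    (fun q => q.1 < q.2 ∧ x q.2 < x q.1)) with hA
  set B := ((Finset.Icc 1 n ×ˢ Finset.Icc 1 n).filter
    (fun q => q.1 < q.2 ∧ y q.2 < y q.1)) with hB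
  have memA : ∀ p q : ℕ, (p, q) ∈ A ↔
      (1 ≤ p ∧ p ≤ n) ∧ (1 ≤ q ∧ q ≤ n) ∧ p < q ∧ x q < x p := by
    intro p q
    simp [hA, Finset.mem_filter, Finset.mem_product, Finset.mem_Icc, and_assoc]
  have memB : ∀ p q : ℕ, (p, q) ∈ B ↔
      (1 ≤ p ∧ p ≤ n) ∧ (1 ≤ q ∧ q ≤ n) ∧ p < q ∧ y q < y p := by
    intro p q
    simp [hB, Finset.mem_filter, Finset.mem_product, Finset.mem_Icc, and_assoc]
  set Φ : ℕ × ℕ → ℕ × ℕ := fun pq =>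
    (if pq.1 = k1 ∧ a < x pq.2 then k0 else pq.1,
     if pq.2 = k0 ∧ x pq.1 < b then k1 else pq.2) with hΦ
  have hΦval : ∀ p q : ℕ, Φ (p, q) =
      (if p = k1 ∧ a < x q then k0 else p, if q = k0 ∧ x p < b then k1 else q) := by
    intro p q; rw [hΦ]
  have hxinj : ∀ p q : ℕ, 1 ≤ p → p ≤ n → 1 ≤ q → q ≤ n → x p = x q → p = q := by
    intro p q h1 h2 h3 h4 h
    exact hinj p (Finset.mem_Icc.mpr ⟨h1, h2⟩) q (Finset.mem_Icc.mpr ⟨h3, h4⟩) h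
  have hmaps : ∀ pq ∈ A, Φ pq ∈ B := by
    rintro ⟨p, q⟩ hpq
    rw [memA] at hpq
    obtain ⟨⟨hp1, hpn⟩, ⟨hq1, hqn⟩, hpq, hxqp⟩ := hpq
    by_cases c1 : p = k1 ∧ a < x q
    · have hpk : p = k1 := c1.1
      have hxq : x q < b := by rw [hpk, ← hb] at hxqp; exact hxqp
      have hql : k1 < q := hpk ▸ hpq
      have hc2 : ¬ (q = k0 ∧ x p < b) := fun h => absurd h.1 (by omega)
      rw [hΦval, if_pos c1, if_neg hc2, memB]
      have hyq : y q = x q := hyid q (by omega) (by omega)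
      refine ⟨⟨by omega, by omega⟩, ⟨hq1, hqn⟩, by omega, ?_⟩
      rw [hyq, hyk0]; exact hxq
    · by_cases c2 : q = k0 ∧ x p < b
      · have hqk : q = k0 := c2.1
        have hxp : a < x p := by rw [hqk, ← ha] at hxqp; exact hxqp
        have hpl : p < k0 := hqk ▸ hpq
        rw [hΦval, if_neg c1, if_pos c2, memB]
        have hyp : y p = x p := hyid p (by omega) (by omega)
        refine ⟨⟨hp1, hpn⟩, ⟨by omega, by omega⟩, by omega, ?_⟩
        rw [hyp, hyk1]; exact hxp
      · rw [hΦval, if_neg c1, if_neg c2, memB]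
        refine ⟨⟨hp1, hpn⟩, ⟨hq1, hqn⟩, hpq, ?_⟩
        rcases eq_or_ne p k0 with hpk0 | hpk0
        · have hyp : y p = b := by rw [hpk0, hyk0]
          rcases eq_or_ne q k1 with hqk1 | hqk1
          · rw [hyp, hqk1, hyk1]; omega
          · have hqk0 : q ≠ k0 := by omega
            rw [hyp, hyid q hqk0 hqk1]
            rw [hpk0, ← ha] at hxqp; omega
        rcases eq_or_ne p k1 with hpk1 | hpk1
        · have hxq : x q ≤ a := by
            by_contra h; exact c1 ⟨hpk1, by omega⟩
          have hqk1 : q ≠ k1 := by omega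
          have hqk0 : q ≠ k0 := by omega
          have hne : x q ≠ a := fun h =>
            hqk0 (hxinj q k0 hq1 hqn hk0 (by omega) (h.trans ha))
          rw [hpk1, hyk1, hyid q hqk0 hqk1]; omega
        · rw [hyid p hpk0 hpk1]
          rcases eq_or_ne q k0 with hqk0 | hqk0
          · have hxp : b ≤ x p := by
              by_contra h; exact c2 ⟨hqk0, by omega⟩
            have hne : x p ≠ b := fun h =>
              hpk1 (hxinj p k1 hp1 hpn (by omega) hk1 (h.trans hb))
            rw [hqk0, hyk0]; omega
          rcases eq_or_ne q k1 with hqk1 | hqk1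
          · rw [hqk1, hyk1]
            rw [hqk1, ← hb] at hxqp; omega
          · rw [hyid q hqk0 hqk1]; omega
  have hinjΦ : Set.InjOn Φ A := by
    rintro ⟨p, q⟩ hpq ⟨p', q'⟩ hpq' heq
    rw [Finset.mem_coe, memA] at hpq hpq'
    obtain ⟨⟨hp1, hpn⟩, ⟨hq1, hqn⟩, hpq, hxqp⟩ := hpq
    obtain ⟨⟨hp1', hpn'⟩, ⟨hq1', hqn'⟩, hpq', hxqp'⟩ := hpq'
    rw [hΦval, hΦval, Prod.mk.injEq] at heq
    obtain ⟨h1, h2⟩ := heq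
    rw [Prod.mk.injEq]
    by_cases c1 : p = k1 ∧ a < x q
    · rw [if_pos c1] at h1
      have hql : k1 < q := c1.1 ▸ hpq
      have hc2 : ¬ (q = k0 ∧ x p < b) := fun h => absurd h.1 (by omega)
      rw [if_neg hc2] at h2
      by_cases c1' : p' = k1 ∧ a < x q'
      · rw [if_pos c1'] at h1
        have hql' : k1 < q' := c1'.1 ▸ hpq'
        have hc2' : ¬ (q' = k0 ∧ x p' < b) := fun h => absurd h.1 (by omega)
        rw [if_neg hc2'] at h2
        exact ⟨c1.1.trans c1'.1.symm, h2⟩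
      · rw [if_neg c1'] at h1
        by_cases c2' : q' = k0 ∧ x p' < b
        · rw [if_pos c2'] at h2
          exact absurd h2 (by omega)
        · rw [if_neg c2'] at h2
          exfalso
          rw [← h1, ← ha] at hxqp'
          have := c1.2
          rw [h2] at this
          omega
    · rw [if_neg c1] at h1
      by_cases c2 : q = k0 ∧ x p < b
      · rw [if_pos c2] at h2
        have hpl : p < k0 := c2.1 ▸ hpq
        by_cases c1' : p' = k1 ∧ a < x q'
        · rw [if_pos c1'] at h1
          exact absurd h1 (by omega)
        · rw [if_neg c1'] at h1
          by_cases c2' : q' = k0 ∧ x p' < b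
          · rw [if_pos c2'] at h2
            exact ⟨h1, c2.1.trans c2'.1.symm⟩
          · rw [if_neg c2'] at h2
            exfalso
            rw [← h2, ← hb] at hxqp'
            rw [← h1] at hxqp'
            have := c2.2
            omega
      · rw [if_neg c2] at h2
        by_cases c1' : p' = k1 ∧ a < x q'
        · rw [if_pos c1'] at h1
          have hql' : k1 < q' := c1'.1 ▸ hpq'
          have hc2' : ¬ (q' = k0 ∧ x p' < b) := fun h => absurd h.1 (by omega)
          rw [if_neg hc2'] at h2
          exfalso
          rw [h1, ← ha] at hxqp
          have := c1'.2
          rw [← h2] at this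
          omega
        · rw [if_neg c1'] at h1
          by_cases c2' : q' = k0 ∧ x p' < b
          · rw [if_pos c2'] at h2
            exfalso
            have hpl' : p' < k0 := c2'.1 ▸ hpq'
            rw [h2, ← hb] at hxqp
            rw [h1] at hxqp
            have := c2'.2
            omega
          · rw [if_neg c2'] at h2
            exact ⟨h1, h2⟩
  have hk0k1B : (k0, k1) ∈ B := by
    rw [memB]
    exact ⟨⟨hk0, by omega⟩, ⟨by omega, hk1⟩, hkk, by rw [hyk0, hyk1]; omega⟩
  have hnotim : (k0, k1) ∉ A.image Φ := by
    rw [Finset.mem_image]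
    rintro ⟨⟨p, q⟩, hpq, heq⟩
    rw [memA] at hpq
    obtain ⟨⟨hp1, hpn⟩, ⟨hq1, hqn⟩, hpq, hxqp⟩ := hpq
    rw [hΦval, Prod.mk.injEq] at heq
    obtain ⟨h1, h2⟩ := heq
    by_cases c2 : q = k0 ∧ x p < b
    · have hpl : p < k0 := c2.1 ▸ hpq
      by_cases c1 : p = k1 ∧ a < x q
      · have := c1.1; omega
      · rw [if_neg c1] at h1; omega
    · rw [if_neg c2] at h2
      by_cases c1 : p = k1 ∧ a < x q
      · have h' := c1.1
        omega
      · rw [if_neg c1] at h1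
        rw [h2, ← hb] at hxqp
        rw [h1, ← ha] at hxqp
        omega
  have himcard : (A.image Φ).card = A.card := Finset.card_image_of_injOn hinjΦ
  have hsub : A.image Φ ⊆ B := by
    intro pq hpq
    rw [Finset.mem_image] at hpq
    obtain ⟨pq', hpq', rfl⟩ := hpq
    exact hmaps _ hpq'
  have hss : A.image Φ ⊂ B := ⟨hsub, fun h => hnotim (h hk0k1B)⟩
  have hcard := Finset.card_lt_card hss
  have e1 : lenInv n x = A.card := rfl
  have e2 : lenInv n y = B.card := rfl
  omega
lemma perm_surj {n : ℕ} {w : ℕ → ℕ} (hw : IsPermOf n w) :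
    ∀ l ∈ Finset.Icc 1 n, ∃ k ∈ Finset.Icc 1 n, w k = l := by
  intro l hl
  obtain ⟨k, hk, hkl⟩ := Finset.surj_on_of_inj_on_of_card_le (fun k _ => w k)
    (fun k hk => hw.1 k hk) (fun k l hk hl h => hw.2.1 k hk l hl h) le_rfl l hl
  exact ⟨k, hk, hkl.symm⟩

lemma bruhatStep_d {n : ℕ} {x y : ℕ → ℕ} (hx : IsPermOf n x) (hstep : BruhatStep n x y) :
    IsPermOf n y ∧ ∀ p q, dInv x p q ≤ dInv y p q := by
  obtain ⟨hlen, a, b, ha1, hab, hbn, hswap⟩ := hstep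
  have haI : a ∈ Finset.Icc 1 n := Finset.mem_Icc.mpr ⟨ha1, by omega⟩
  have hbI : b ∈ Finset.Icc 1 n := Finset.mem_Icc.mpr ⟨by omega, hbn⟩
  obtain ⟨k0, hk0I, hk0⟩ := perm_surj hx a haI
  obtain ⟨k1, hk1I, hk1⟩ := perm_surj hx b hbI
  have hk0I' := Finset.mem_Icc.mp hk0I
  have hk1I' := Finset.mem_Icc.mp hk1I
  have hk01 : k0 ≠ k1 := by rintro rfl; omega
  have hxval : ∀ m, m ≠ k0 → m ≠ k1 → x m ≠ a ∧ x m ≠ b := by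
    intro m h0 h1
    by_cases hm : m ∈ Finset.Icc 1 n
    · exact ⟨fun h => h0 (hx.2.1 m hm k0 hk0I (h.trans hk0.symm)),
        fun h => h1 (hx.2.1 m hm k1 hk1I (h.trans hk1.symm))⟩
    · have := hx.2.2 m hm
      rw [Finset.mem_Icc] at hm haI hbI
      constructor <;> intro h <;> omega
  have hyx : ∀ m, y m = x (Equiv.swap k0 k1 m) := by
    intro m
    rcases eq_or_ne m k0 with rfl | h0
    · rw [hswap, hk0, Equiv.swap_apply_left, Equiv.swap_apply_left, hk1]
    rcases eq_or_ne m k1 with rfl | h1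
    · rw [hswap, hk1, Equiv.swap_apply_right, Equiv.swap_apply_right, hk0]
    · obtain ⟨hma, hmb⟩ := hxval m h0 h1
      rw [hswap, swap_other h0 h1, swap_other hma hmb]
  have hσI : ∀ m ∈ Finset.Icc 1 n, Equiv.swap k0 k1 m ∈ Finset.Icc 1 n := by
    intro m hm
    rcases eq_or_ne m k0 with rfl | h0
    · rw [Equiv.swap_apply_left]; exact hk1I
    rcases eq_or_ne m k1 with rfl | h1
    · rw [Equiv.swap_apply_right]; exact hk0I
    · rw [swap_other h0 h1]; exact hm
  have hyperm : IsPermOf n y := by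
    refine ⟨fun k hk => ?_, fun k hk l hl h => ?_, fun k hk => ?_⟩
    · rw [hyx]; exact hx.1 _ (hσI k hk)
    · rw [hyx, hyx] at h
      exact (Equiv.swap k0 k1).injective (hx.2.1 _ (hσI k hk) _ (hσI l hl) h)
    · have h0 : k ≠ k0 := fun h => hk (h ▸ hk0I)
      have h1 : k ≠ k1 := fun h => hk (h ▸ hk1I)
      rw [hyx, swap_other h0 h1]; exact hx.2.2 k hk
  refine ⟨hyperm, ?_⟩
  -- we must have k0 < k1
  rcases lt_or_gt_of_ne hk01 with hlt | hgt
  swap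
  · -- k1 < k0 : contradiction with the length increase
    exfalso
    have hyk1 : y k1 = a := by rw [hyx, Equiv.swap_apply_right, hk0]
    have hyk0 : y k0 = b := by rw [hyx, Equiv.swap_apply_left, hk1]
    have hxy : ∀ m, x m = y (Equiv.swap k1 k0 m) := by
      intro m
      rw [Equiv.swap_comm k1 k0, hyx, Equiv.swap_apply_self]
    have := lenInv_swap_lt (n := n) (x := y) (y := x) (k0 := k1) (k1 := k0)
      hyperm.2.1 (by omega) hgt (by omega) (by rw [hyk1, hyk0]; omega) hxy
    omega
  · -- k0 < k1 : monotonicity of the dot statistic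
    intro P Q
    unfold dInv
    by_cases hQ : Q ≤ a
    · apply Finset.card_le_card
      intro k hk
      rw [Finset.mem_filter] at hk ⊢
      refine ⟨hk.1, ?_⟩
      rcases eq_or_ne k k0 with rfl | h0
      · rw [hyx, Equiv.swap_apply_left, hk1]; omega
      rcases eq_or_ne k k1 with rfl | h1
      · rw [hyx, Equiv.swap_apply_right, hk0]; omega
      · rw [hyx, swap_other h0 h1]; exact hk.2
    · apply Finset.card_le_card_of_injOn (fun k => if k = k1 then k0 else k)
      · intro k hk
        simp only [Finset.coe_filter, Set.mem_setOf_eq] at hk ⊢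
        obtain ⟨hkI, hkQ⟩ := hk
        rw [Finset.mem_Icc] at hkI
        split_ifs with h1
        · subst h1
          rw [hk1] at hkQ
          refine ⟨Finset.mem_Icc.mpr ⟨by omega, by omega⟩, ?_⟩
          rw [hyx, Equiv.swap_apply_left, hk1]; omega
        · have h0 : k ≠ k0 := by rintro rfl; rw [hk0] at hkQ; omega
          refine ⟨Finset.mem_Icc.mpr ⟨by omega, by omega⟩, ?_⟩
          rw [hyx, swap_other h0 h1]; exact hkQ
      · intro k hk l hl h
        simp only [Finset.coe_filter, Set.mem_setOf_eq] at hk hl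
        simp only at h
        split_ifs at h with h1 h2 h2
        · omega
        · subst h1; exfalso; rw [← h, hk0] at hl; omega
        · subst h2; exfalso; rw [h, hk0] at hk; omega
        · exact h

lemma bruhatLe_d {n : ℕ} {x y : ℕ → ℕ} (hx : IsPermOf n x) (h : BruhatLe n x y) :
    IsPermOf n y ∧ ∀ p q, dInv x p q ≤ dInv y p q := by
  induction h with
  | refl => exact ⟨hx, fun _ _ => le_rfl⟩
  | tail hxb hbc ih =>
      obtain ⟨hpb, hd⟩ := ih
      obtain ⟨hpc, hd2⟩ := bruhatStep_d hpb hbc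
      exact ⟨hpc, fun p q => (hd p q).trans (hd2 p q)⟩
lemma tau_col_mono {lam : ℕ → ℕ} {n : ℕ} {ptau : ℕ → ℕ × ℕ} (h : IsSuperstandard lam n ptau) :
    ∀ k k', 1 ≤ k → k ≤ k' → k' ≤ n → colT ptau k ≤ colT ptau k' := by
  intro k k' h1 h2 h3
  induction k', h2 using Nat.le_induction with
  | base => exact le_rfl
  | succ m hm ih =>
      exact (ih (by omega)).trans (h.2.2 m (by omega) (by omega))

lemma lowerset_eq_Icc {n : ℕ} (S : Finset ℕ) (hS : S ⊆ Finset.Icc 1 n)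
    (hdc : ∀ k ∈ S, ∀ m, 1 ≤ m → m ≤ k → m ∈ S) : S = Finset.Icc 1 S.card := by
  have hcard : ∀ k ∈ S, k ≤ S.card := by
    intro k hk
    have hsub : Finset.Icc 1 k ⊆ S := by
      intro m hm; rw [Finset.mem_Icc] at hm; exact hdc k hk m hm.1 hm.2
    calc k = (Finset.Icc 1 k).card := by rw [Nat.card_Icc]; omega
      _ ≤ S.card := Finset.card_le_card hsub
  ext k
  rw [Finset.mem_Icc]
  constructor
  · intro hk
    have h1 := hS hk; rw [Finset.mem_Icc] at h1
    exact ⟨h1.1, hcard k hk⟩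
  · rintro ⟨hk1, hk2⟩
    by_contra hk
    have hsub : S ⊆ Finset.Icc 1 (k-1) := by
      intro m hm
      have h1 := hS hm; rw [Finset.mem_Icc] at h1 ⊢
      refine ⟨h1.1, ?_⟩
      by_contra h
      exact hk (hdc m hm k hk1 (by omega))
    have := Finset.card_le_card hsub
    rw [Nat.card_Icc] at this; omega

lemma count_cols {n : ℕ} {ptau p : ℕ → ℕ × ℕ} {w : ℕ → ℕ} (hw : IsPermTab n ptau p w)
    (j m : ℕ) (hm : m ≤ n) :
    ((Finset.Icc 1 m).filter (fun k => colT p k ≤ j)).card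
      = ((Finset.Icc 1 n).filter (fun k => colT ptau k ≤ j ∧ w k ≤ m)).card := by
  obtain ⟨hperm, htab⟩ := hw
  symm
  apply Finset.card_bij (fun k _ => w k)
  · intro k hk
    rw [Finset.mem_filter] at hk
    obtain ⟨hkI, hcol, hwk⟩ := hk
    have hwI := hperm.1 k hkI
    rw [Finset.mem_Icc] at hwI
    rw [Finset.mem_filter, Finset.mem_Icc]
    refine ⟨⟨hwI.1, hwk⟩, ?_⟩
    show (p (w k)).2 ≤ j
    rw [htab k hkI]
    exact hcol
  · intro k hk k' hk' h
    rw [Finset.mem_filter] at hk hk'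
    exact hperm.2.1 k hk.1 k' hk'.1 h
  · intro l hl
    rw [Finset.mem_filter, Finset.mem_Icc] at hl
    obtain ⟨⟨hl1, hlm⟩, hcol⟩ := hl
    have hlI : l ∈ Finset.Icc 1 n := Finset.mem_Icc.mpr ⟨hl1, by omega⟩
    obtain ⟨k, hkI, hkl⟩ := perm_surj hperm l hlI
    refine ⟨k, ?_, hkl⟩
    rw [Finset.mem_filter]
    refine ⟨hkI, ?_, by omega⟩
    show (ptau k).2 ≤ j
    rw [← htab k hkI, hkl]
    exact hcol

lemma row_rank {lam : ℕ → ℕ} {n : ℕ} {p : ℕ → ℕ × ℕ} (hp : IsStd lam n p)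
    {k : ℕ} (hk1 : 1 ≤ k) (hkn : k ≤ n) :
    rowT p k = ((Finset.Icc 1 k).filter (fun k' => colT p k' = colT p k)).card := by
  obtain ⟨⟨hbox, hinj, hsurj⟩, hcs, hrs⟩ := hp
  have hkI : k ∈ Finset.Icc (0+1) (0+n) := Finset.mem_Icc.mpr ⟨by omega, by omega⟩
  obtain ⟨hc1, hc2, hc3⟩ := hbox k hkI
  have key : ((Finset.Icc 1 k).filter (fun k' => colT p k' = colT p k)).card
      = (Finset.Icc 1 (rowT p k)).card := by
    apply Finset.card_bij (fun k' _ => rowT p k')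
    · intro k' hk'
      rw [Finset.mem_filter, Finset.mem_Icc] at hk'
      obtain ⟨⟨h1, h2⟩, hcol⟩ := hk'
      have hk'I : k' ∈ Finset.Icc (0+1) (0+n) := Finset.mem_Icc.mpr ⟨by omega, by omega⟩
      rw [Finset.mem_Icc]
      constructor
      · have := (hbox k' hk'I).2.1
        exact this
      · by_contra hcon
        have := hcs k hkI k' hk'I hcol.symm (by omega)
        omega
    · intro k' hk' k'' hk'' h
      rw [Finset.mem_filter, Finset.mem_Icc] at hk' hk''
      apply hinj k' (Finset.mem_Icc.mpr ⟨by omega, by omega⟩)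
        k'' (Finset.mem_Icc.mpr ⟨by omega, by omega⟩)
      have hcol : (p k').2 = (p k'').2 := hk'.2.trans hk''.2.symm
      exact Prod.ext h hcol
    · intro s hs
      rw [Finset.mem_Icc] at hs
      obtain ⟨ks, hksI, hks⟩ := hsurj (s, colT p k) hc1 (by exact hs.1)
        (by show s ≤ lam (colT p k); calc s ≤ rowT p k := hs.2
              _ ≤ lam (colT p k) := hc3)
      have hrowks : rowT p ks = s := by show (p ks).1 = s; rw [hks]
      have hcolks : colT p ks = colT p k := by show (p ks).2 = colT p k; rw [hks]
      refine ⟨ks, ?_, hrowks⟩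
      rw [Finset.mem_filter, Finset.mem_Icc]
      rw [Finset.mem_Icc] at hksI
      refine ⟨⟨by omega, ?_⟩, hcolks⟩
      rcases lt_or_eq_of_le hs.2 with hlt | heq
      · have := hcs ks (Finset.mem_Icc.mpr hksI) k hkI hcolks (by omega)
        omega
      · have : ks = k := by
          apply hinj ks (Finset.mem_Icc.mpr hksI) k hkI
          rw [hks, heq]
          exact Prod.ext rfl rfl
        omega
  rw [key, Nat.card_Icc]
  omega
lemma bruhat_lt_lex {n : ℕ} {lam : ℕ → ℕ} {ptau py pv : ℕ → ℕ × ℕ} {wy wv : ℕ → ℕ}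
    (htau : IsSuperstandard lam n ptau)
    (hy : IsStd lam n py) (hv : IsStd lam n pv)
    (hwy : IsPermTab n ptau py wy) (hwv : IsPermTab n ptau pv wv)
    (hble : BruhatLe n wy wv) (hne : wy ≠ wv) : LexLT n py pv := by
  classical
  set P : ℕ → ℕ := fun j => ((Finset.Icc 1 n).filter (fun k => colT ptau k ≤ j)).card with hP
  have hSj : ∀ j, (Finset.Icc 1 n).filter (fun k => colT ptau k ≤ j) = Finset.Icc 1 (P j) := by
    intro j
    apply lowerset_eq_Icc _ (Finset.filter_subset _ _)
    intro k hk m h1 h2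
    rw [Finset.mem_filter] at hk ⊢
    have hkI := Finset.mem_Icc.mp hk.1
    refine ⟨Finset.mem_Icc.mpr ⟨h1, by omega⟩, ?_⟩
    exact (tau_col_mono htau m k h1 h2 (by omega)).trans hk.2
  have hPn : ∀ j, P j ≤ n := by
    intro j
    calc P j ≤ (Finset.Icc 1 n).card := Finset.card_filter_le _ _
      _ = n := by rw [Nat.card_Icc]; omega
  have hC : ∀ (p : ℕ → ℕ × ℕ) (w : ℕ → ℕ), IsPermTab n ptau p w → ∀ m, m ≤ n → ∀ j,
      ((Finset.Icc 1 m).filter (fun k => colT p k ≤ j)).card + dInv w (P j) (m+1) = P j := by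
    intro p w hw m hm j
    rw [count_cols hw j m hm]
    have e1 : (Finset.Icc 1 n).filter (fun k => colT ptau k ≤ j ∧ w k ≤ m)
        = (Finset.Icc 1 (P j)).filter (fun k => w k ≤ m) := by
      rw [← hSj j, Finset.filter_filter]
    rw [e1]
    have e2 : dInv w (P j) (m+1) = ((Finset.Icc 1 (P j)).filter (fun k => ¬ w k ≤ m)).card := by
      unfold dInv
      congr 1
      apply Finset.filter_congr
      intro k _
      constructor <;> intro h <;> omega
    rw [e2, Finset.card_filter_add_card_filter_not, Nat.card_Icc]
    omega
  obtain ⟨hvperm, hd⟩ := bruhatLe_d hwy.1 hble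
  have hmono : ∀ m, m ≤ n → ∀ j, ((Finset.Icc 1 m).filter (fun k => colT pv k ≤ j)).card
      ≤ ((Finset.Icc 1 m).filter (fun k => colT py k ≤ j)).card := by
    intro m hm j
    have h1 := hC py wy hwy m hm j
    have h2 := hC pv wv hwv m hm j
    have h3 := hd (P j) (m+1)
    omega
  have hdzero : ∀ w : ℕ → ℕ, IsPermOf n w → ∀ j, dInv w (P j) (n+1) = 0 := by
    intro w hwperm j
    unfold dInv
    rw [Finset.card_eq_zero, Finset.filter_eq_empty_iff]
    intro k hk
    rw [Finset.mem_Icc] at hk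
    have h := hwperm.1 k (Finset.mem_Icc.mpr ⟨hk.1, hk.2.trans (hPn j)⟩)
    rw [Finset.mem_Icc] at h
    omega
  -- the set of entries where the columns differ is nonempty
  have hTne : ((Finset.Icc 1 n).filter (fun k => colT py k ≠ colT pv k)).Nonempty := by
    rw [Finset.filter_nonempty_iff]
    by_contra hcon
    push_neg at hcon
    apply hne
    have hpeq : ∀ k ∈ Finset.Icc 1 n, py k = pv k := by
      intro k hk
      have hkI := Finset.mem_Icc.mp hk
      have hcol : colT py k = colT pv k := hcon k hk
      have hr1 := row_rank hy hkI.1 hkI.2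
      have hr2 := row_rank hv hkI.1 hkI.2
      have hrow : rowT py k = rowT pv k := by
        rw [hr1, hr2]
        have : ∀ k' ∈ Finset.Icc 1 k, (colT py k' = colT py k) ↔ (colT pv k' = colT pv k) := by
          intro k' hk'
          rw [Finset.mem_Icc] at hk'
          rw [hcon k' (Finset.mem_Icc.mpr ⟨hk'.1, by omega⟩), hcol]
        rw [Finset.filter_congr this]
      exact Prod.ext hrow hcol
    funext k
    by_cases hk : k ∈ Finset.Icc 1 n
    · have h1 := hwy.2 k hk
      have h2 := hwv.2 k hk
      have hwyI := hwy.1.1 k hk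
      have hwvI := hwv.1.1 k hk
      have hwyI' := Finset.mem_Icc.mp hwyI
      have hwvI' := Finset.mem_Icc.mp hwvI
      apply hv.1.2.1 (wy k) (Finset.mem_Icc.mpr (by omega)) (wv k) (Finset.mem_Icc.mpr (by omega))
      rw [← hpeq (wy k) hwyI, h1, h2]
    · rw [hwy.1.2.2 k hk, hwv.1.2.2 k hk]
  set T := (Finset.Icc 1 n).filter (fun k => colT py k ≠ colT pv k) with hT
  set l := T.max' hTne with hldef
  have hlT : l ∈ T := T.max'_mem hTne
  rw [hT, Finset.mem_filter, Finset.mem_Icc] at hlT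
  obtain ⟨⟨hl1, hln⟩, hlne⟩ := hlT
  have hagree : ∀ m, l < m → m ≤ n → colT py m = colT pv m := by
    intro m h1 h2
    by_contra hcon
    have hmT : m ∈ T := by
      rw [hT, Finset.mem_filter, Finset.mem_Icc]
      exact ⟨⟨by omega, h2⟩, hcon⟩
    have := T.le_max' m hmT
    omega
  have hdisj : ∀ pr : ℕ → Prop, Disjoint ((Finset.Icc 1 l).filter pr) ((Finset.Ioc l n).filter pr) := by
    intro pr
    rw [Finset.disjoint_left]
    intro a ha hb
    rw [Finset.mem_filter, Finset.mem_Icc] at ha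
    rw [Finset.mem_filter, Finset.mem_Ioc] at hb
    omega
  have hsplit : ∀ (p : ℕ → ℕ × ℕ) (j : ℕ),
      ((Finset.Icc 1 n).filter (fun k => colT p k ≤ j)).card
        = ((Finset.Icc 1 l).filter (fun k => colT p k ≤ j)).card
          + ((Finset.Ioc l n).filter (fun k => colT p k ≤ j)).card := by
    intro p j
    have hun : Finset.Icc 1 n = Finset.Icc 1 l ∪ Finset.Ioc l n := by
      ext m
      rw [Finset.mem_union, Finset.mem_Icc, Finset.mem_Icc, Finset.mem_Ioc]
      omega
    rw [hun, Finset.filter_union]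
    apply Finset.card_union_of_disjoint
    rw [Finset.disjoint_left]
    intro a ha hb
    rw [Finset.mem_filter, Finset.mem_Icc] at ha
    rw [Finset.mem_filter, Finset.mem_Ioc] at hb
    omega
  have htail : ∀ j, ((Finset.Ioc l n).filter (fun k => colT py k ≤ j)).card
      = ((Finset.Ioc l n).filter (fun k => colT pv k ≤ j)).card := by
    intro j
    congr 1
    apply Finset.filter_congr
    intro k hk
    rw [Finset.mem_Ioc] at hk
    rw [hagree k hk.1 hk.2]
  have heql : ∀ j, ((Finset.Icc 1 l).filter (fun k => colT py k ≤ j)).card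
      = ((Finset.Icc 1 l).filter (fun k => colT pv k ≤ j)).card := by
    intro j
    have h1 := hC py wy hwy n le_rfl j
    have h2 := hC pv wv hwv n le_rfl j
    have h3 := hdzero wy hwy.1 j
    have h4 := hdzero wv hvperm j
    have h5 := hsplit py j
    have h6 := hsplit pv j
    have h7 := htail j
    omega
  have hdrop : ∀ (p : ℕ → ℕ × ℕ) (j : ℕ),
      ((Finset.Icc 1 l).filter (fun k => colT p k ≤ j)).card
        = ((Finset.Icc 1 (l-1)).filter (fun k => colT p k ≤ j)).card
          + (if colT p l ≤ j then 1 else 0) := by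
    intro p j
    have hins : Finset.Icc 1 l = insert l (Finset.Icc 1 (l-1)) := by
      ext m
      rw [Finset.mem_insert, Finset.mem_Icc, Finset.mem_Icc]
      omega
    rw [hins, Finset.filter_insert]
    split_ifs
    · rw [Finset.card_insert_of_notMem (by
        rw [Finset.mem_filter, Finset.mem_Icc]
        rintro ⟨⟨_, h⟩, _⟩
        omega)]
    · omega
  refine ⟨l, hl1, hln, ?_, fun m h1 h2 => (hagree m h1 h2).symm⟩
  have hBA : colT pv l ≤ colT py l := by
    by_contra hcon
    have h1 := hmono (l-1) (by omega) (colT py l)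
    have h2 := heql (colT py l)
    have h3 := hdrop py (colT py l)
    have h4 := hdrop pv (colT py l)
    rw [if_pos le_rfl] at h3
    rw [if_neg (by omega)] at h4
    omega
  have : colT pv l ≠ colT py l := fun h => hlne h.symm
  omega
/-- lexicographic bounds after swapping at a strong descent. -/
theorem lex_lt_after_descent_swap (n : ℕ) (lam : ℕ → ℕ)
    (hlam : IsPartition n lam)
    (pt pt' pv ptau : ℕ → ℕ × ℕ)
    (ht : IsStd lam n pt) (ht' : IsStd lam n pt')
    (htau : IsSuperstandard lam n ptau)
    (i : ℕ) (hi : i < n)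
    (hres : ∀ k, i < k → k ≤ n → pt k = pt' k)
    (j : ℕ) (hjSD : inSD 0 n pt j) (hij : i < j) (hiA : inA 0 n pt i)
    (hv : ∀ m, pv m = pt (Equiv.swap j (j+1) m)) :
    LexLT n pv pt' ∧
      (∀ psv, (∀ m, psv m = pv (Equiv.swap i (i+1) m)) → inSA 0 n pv i →
        IsStd lam n psv ∧ LexLT n psv pt') ∧
      (∀ py wy wv, IsStd lam n py →
        IsPermTab n ptau py wy → IsPermTab n ptau pv wv →
        BruhatLe n wy wv → wy ≠ wv → LexLT n py pt') := by
  obtain ⟨hj1, hjn, hjcol⟩ := hjSD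
  have hrowj : rowT pt j ≠ rowT pt (j+1) := by
    intro h
    have := ht.2.2 (j+1) (Finset.mem_Icc.mpr ⟨by omega, by omega⟩)
      j (Finset.mem_Icc.mpr ⟨by omega, by omega⟩) h.symm hjcol
    omega
  have hcolj : colT pt j ≠ colT pt (j+1) := by omega
  have hvstd : IsStd lam n pv := swap_std ht (by omega) (by omega) hrowj hcolj hv
  have hvj1 : pv (j+1) = pt j := by rw [hv, Equiv.swap_apply_right]
  have hvid : ∀ m, m ≠ j → m ≠ j+1 → pv m = pt m := fun m h1 h2 => by
    rw [hv, swap_other h1 h2]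
  have part1 : LexLT n pv pt' := by
    refine ⟨j+1, by omega, by omega, ?_, ?_⟩
    · have h1 : pt' (j+1) = pt (j+1) := (hres (j+1) (by omega) (by omega)).symm
      simp only [colT]
      rw [h1, hvj1]
      exact hjcol
    · intro m h1 h2
      simp only [colT]
      rw [← hres m (by omega) h2, hvid m (by omega) (by omega)]
  refine ⟨part1, ?_, ?_⟩
  · intro psv hsv hSA
    obtain ⟨hi1, hin, hrowvi⟩ := hSA
    have hcolvi : colT pv i ≠ colT pv (i+1) := by
      intro h
      have := hvstd.2.1 (i+1) (Finset.mem_Icc.mpr ⟨by omega, by omega⟩)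
        i (Finset.mem_Icc.mpr ⟨by omega, by omega⟩) h.symm hrowvi
      omega
    have hstd := swap_std hvstd (by omega) (by omega) (by omega) hcolvi hsv
    refine ⟨hstd, j+1, by omega, by omega, ?_, ?_⟩
    · have h1 : pt' (j+1) = pt (j+1) := (hres (j+1) (by omega) (by omega)).symm
      have h2 : psv (j+1) = pv (j+1) := by
        rw [hsv, swap_other (by omega : j+1 ≠ i) (by omega : j+1 ≠ i+1)]
      simp only [colT]
      rw [h1, h2, hvj1]
      exact hjcol
    · intro m h1 h2
      have h3 : psv m = pv m := by
        rw [hsv, swap_other (by omega : m ≠ i) (by omega : m ≠ i+1)]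
      simp only [colT]
      rw [← hres m (by omega) h2, h3, hvid m (by omega) (by omega)]
  · intro py wy wv hystd hwy hwv hble hne
    exact lexLT_trans (bruhat_lt_lex htau hystd hvstd hwy hwv hble hne) part1
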